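/- arXiv:1612.07287 — 2 statements merged into one kernel-verified Lean document; each statement's English description precedes it below -/
import Mathlib

section
/- For a single finite set S = {s_1 < ... < s_m} ⊂ ℝ, one iteration of g starting from {0} gives g_S({0}) = [−Δ_S/2, Δ_S/2], where Δ_S is the maximum gap of S. -/
open Set Pointwise

noncomputable section

/-- Voronoi cell of `c` with respect to `S ⊆ ℝ`. -/
def vorR (S : Set ℝ) (c : ℝ) : Set ℝ := {x | ∀ c' ∈ S, |x - c| ≤ |x - c'|}

/-- The operator `g_S(A) = ⋃_{c ∈ S} ((ch S + A) ∩ V_S(c)) − c` on subsets of ℝ. -/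
def gOpR (S A : Set ℝ) : Set ℝ :=
  ⋃ c ∈ S, (fun x => x - c) '' ((convexHull ℝ S + A) ∩ vorR S c)

/-- The maximum gap between consecutive elements of a set `S ⊆ ℝ` (0 if no gap exists). -/
def maxGap (S : Set ℝ) : ℝ :=
  sSup {g | ∃ a ∈ S, ∃ b ∈ S, a < b ∧ (∀ t ∈ S, ¬(a < t ∧ t < b)) ∧ g = b - a}

theorem stmt16 (S : Set ℝ) (hfin : S.Finite) (hne : S.Nonempty) :
    gOpR S {0} = Icc (-(maxGap S / 2)) (maxGap S / 2) := by
  set G : Set ℝ := {g | ∃ a ∈ S, ∃ b ∈ S, a < b ∧ (∀ t ∈ S, ¬(a < t ∧ t < b)) ∧ g = b - a}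
    with hG
  have hGfin : G.Finite := by
    apply Set.Finite.subset ((hfin.prod hfin).image (fun p : ℝ × ℝ => p.2 - p.1))
    rintro g ⟨a, ha, b, hb, _, _, rfl⟩
    exact ⟨(a, b), ⟨ha, hb⟩, rfl⟩
  have hbdd : BddAbove G := hGfin.bddAbove
  have hΔ : maxGap S = sSup G := rfl
  have hΔ0 : 0 ≤ maxGap S := by
    rcases eq_empty_or_nonempty G with h | h
    · rw [hΔ, h, Real.sSup_empty]
    · obtain ⟨g, hg⟩ := h
      have h1 : g ≤ sSup G := le_csSup hbdd hg
      obtain ⟨a, _, b, _, hab, _, heq⟩ := hg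
      rw [hΔ]; linarith
  -- basic facts about inf and sup of S
  have hiS : sInf S ∈ S := hne.csInf_mem hfin
  have hsS : sSup S ∈ S := hne.csSup_mem hfin
  have his : sInf S ≤ sSup S := csInf_le_csSup hne hfin.bddBelow hfin.bddAbove
  have hhull : convexHull ℝ S = Icc (sInf S) (sSup S) := by
    apply subset_antisymm
    · exact convexHull_min (fun s hs =>
        ⟨csInf_le hfin.bddBelow hs, le_csSup hfin.bddAbove hs⟩) (convex_Icc _ _)
    · rw [← segment_eq_Icc his]
      exact segment_subset_convexHull hiS hsS
  have hg : gOpR S {0} = ⋃ c ∈ S, (fun x => x - c) '' (Icc (sInf S) (sSup S) ∩ vorR S c) := by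
    simp only [gOpR, Set.singleton_zero, add_zero, hhull]
  rw [hg]
  ext y
  simp only [mem_iUnion, mem_image, mem_inter_iff, mem_Icc, exists_prop]
  constructor
  · rintro ⟨c, hc, x, ⟨⟨hx1, hx2⟩, hxv⟩, rfl⟩
    have key : |x - c| ≤ maxGap S / 2 := by
      by_cases hxS : x ∈ S
      · have h0 := hxv x hxS
        rw [sub_self, abs_zero] at h0
        linarith
      · set a := sSup (S ∩ Iic x) with ha_def
        set b := sInf (S ∩ Ici x) with hb_def
        have hane : (S ∩ Iic x).Nonempty := ⟨sInf S, hiS, hx1⟩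
        have hbne : (S ∩ Ici x).Nonempty := ⟨sSup S, hsS, hx2⟩
        have ha : a ∈ S ∩ Iic x := hane.csSup_mem (hfin.inter_of_left _)
        have hb : b ∈ S ∩ Ici x := hbne.csInf_mem (hfin.inter_of_left _)
        have hax : a < x := lt_of_le_of_ne ha.2 (fun h => hxS (h ▸ ha.1))
        have hxb : x < b := lt_of_le_of_ne (hb.2) (fun h => hxS (h ▸ hb.1))
        have hgap : ∀ t ∈ S, ¬(a < t ∧ t < b) := by
          rintro t ht ⟨h1, h2⟩
          rcases le_total t x with h | h
          · exact absurd (le_csSup (hfin.inter_of_left _).bddAbove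
              (show t ∈ S ∩ Iic x from ⟨ht, h⟩)) (not_le.mpr h1)
          · exact absurd (csInf_le (hfin.inter_of_left _).bddBelow
              (show t ∈ S ∩ Ici x from ⟨ht, h⟩)) (not_le.mpr h2)
        have hmem : b - a ∈ G := ⟨a, ha.1, b, hb.1, hax.trans hxb, hgap, rfl⟩
        have hba : b - a ≤ maxGap S := le_csSup hbdd hmem
        have h1 : |x - c| ≤ x - a := by
          have := hxv a ha.1
          rwa [abs_of_pos (by linarith : (0:ℝ) < x - a)] at this
        have h2 : |x - c| ≤ b - x := by
          have := hxv b hb.1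
          rwa [abs_sub_comm x b, abs_of_pos (by linarith : (0:ℝ) < b - x)] at this
        linarith
    have := abs_le.mp key
    exact ⟨this.1, this.2⟩
  · rintro ⟨h1, h2⟩
    rcases eq_empty_or_nonempty G with hGe | hGne
    · have hΔz : maxGap S = 0 := by rw [hΔ, hGe, Real.sSup_empty]
      have hy0 : y = 0 := by rw [hΔz] at h1 h2; linarith
      refine ⟨sInf S, hiS, sInf S, ⟨⟨le_refl _, his⟩, ?_⟩, by rw [hy0, sub_self]⟩
      intro c' hc'
      rw [sub_self, abs_zero]
      exact abs_nonneg _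
    · have hΔmem : maxGap S ∈ G := hΔ ▸ hGne.csSup_mem hGfin
      obtain ⟨a, ha, b, hb, hab, hgap, hΔeq⟩ := hΔmem
      have haS : sInf S ≤ a := csInf_le hfin.bddBelow ha
      have hbS : b ≤ sSup S := le_csSup hfin.bddAbove hb
      rcases le_total 0 y with hy | hy
      · refine ⟨a, ha, a + y, ⟨⟨by linarith, by linarith⟩, ?_⟩, by ring⟩
        intro c' hc'
        rw [add_sub_cancel_left, abs_of_nonneg hy]
        rcases le_or_gt c' a with h | h
        · have : a + y - c' ≤ |a + y - c'| := le_abs_self _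
          linarith
        · have hbc : b ≤ c' := by
            by_contra hlt
            exact hgap c' hc' ⟨h, not_le.mp hlt⟩
          have : c' - (a + y) ≤ |a + y - c'| := by
            rw [abs_sub_comm]; exact le_abs_self _
          linarith
      · refine ⟨b, hb, b + y, ⟨⟨by linarith, by linarith⟩, ?_⟩, by ring⟩
        intro c' hc'
        rw [add_sub_cancel_left, abs_of_nonpos hy]
        rcases le_or_gt b c' with h | h
        · have : c' - (b + y) ≤ |b + y - c'| := by
            rw [abs_sub_comm]; exact le_abs_self _
          linarith
        · have hca : c' ≤ a := by
            by_contra hlt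
            exact hgap c' hc' ⟨not_le.mp hlt, h⟩
          have : b + y - c' ≤ |b + y - c'| := le_abs_self _
          linarith
end
end

section
/- Fix P_max ≥ 0 and 0 ≤ φ < π/2, and for x ∈ [0, P_max] let T(x) = {(P, Q) ∈ ℝ² : 0 ≤ P ≤ x and |Q| ≤ P tan φ}. Then the triangle D = T(P_max) is F-invariant with respect to the collection 𝕊 = {T(x) : 0 ≤ x ≤ P_max}: for every x ∈ [0, P_max], every z ∈ D, and every p ∈ T(x), the point p + z − proj_{T(x)}(z) lies in D. Moreover D is the minimal F-invariant set with respect to 𝕊 containing the origin. -/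
open Set

noncomputable section

/-- The triangle `T(x)` in the PQ plane with aperture angle `φ`. -/
def Tset (φ x : ℝ) : Set (EuclideanSpace ℝ (Fin 2)) :=
  {z | 0 ≤ z 0 ∧ z 0 ≤ x ∧ |z 1| ≤ z 0 * Real.tan φ}

open RealInnerProductSpace

/-- Uniqueness of the metric projection onto a midpoint-convex set. -/
lemma proj_unique {E : Type*} [NormedAddCommGroup E] [InnerProductSpace ℝ E]
    {K : Set E} (hK : ∀ a ∈ K, ∀ b ∈ K, (1/2:ℝ) • (a + b) ∈ K)
    {z w w₀ : E} (hw : w ∈ K) (hmin : ∀ c ∈ K, dist z w ≤ dist z c)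
    (hw₀ : w₀ ∈ K) (hvar : ∀ c ∈ K, ⟪z - w₀, c - w₀⟫ ≤ 0) : w = w₀ := by
  have hmin₀ : ∀ c ∈ K, dist z w₀ ≤ dist z c := by
    intro c hc
    have h := hvar c hc
    have hkey : ‖z - w₀‖^2 ≤ ‖z - c‖^2 := by
      have hzc : z - c = (z - w₀) - (c - w₀) := by abel
      rw [hzc, norm_sub_sq_real (z - w₀) (c - w₀)]
      nlinarith [sq_nonneg ‖c - w₀‖]
    rw [dist_eq_norm, dist_eq_norm]
    nlinarith [norm_nonneg (z - c), norm_nonneg (z - w₀)]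
  have hd : dist z w = dist z w₀ := le_antisymm (hmin _ hw₀) (hmin₀ _ hw)
  have hm : (1/2:ℝ) • (w + w₀) ∈ K := hK _ hw _ hw₀
  have h2 : dist z w ≤ dist z ((1/2:ℝ) • (w + w₀)) := hmin _ hm
  have hzm : z - (1/2:ℝ) • (w + w₀) = (1/2:ℝ) • ((z - w) + (z - w₀)) := by
    rw [smul_add]; module
  set a := z - w with ha
  set b := z - w₀ with hb
  have hdm : dist z ((1/2:ℝ) • (w + w₀)) = (1/2) * ‖a + b‖ := by
    rw [dist_eq_norm, hzm, norm_smul]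
    simp
  have hab : ‖a‖ = ‖b‖ := by
    rw [ha, hb, ← dist_eq_norm, ← dist_eq_norm]; exact hd
  have hda : dist z w = ‖a‖ := dist_eq_norm z w
  have habn : ‖a - b‖^2 ≤ 0 := by
    have h3 : ‖a‖ ≤ (1/2) * ‖a + b‖ := by rw [← hda]; rw [hdm] at h2; exact h2
    nlinarith [norm_add_sq_real a b, norm_sub_sq_real a b, norm_nonneg a, norm_nonneg (a+b)]
  have : a - b = 0 := by
    have := le_antisymm habn (sq_nonneg _)
    have h0 : ‖a - b‖ = 0 := by nlinarith [norm_nonneg (a - b)]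
    exact norm_eq_zero.mp h0
  have hwb : w₀ - w = 0 := by
    have : (z - w) - (z - w₀) = w₀ - w := by abel
    rw [← this]; exact ‹a - b = 0›
  have := sub_eq_zero.mp hwb
  exact this.symm

/-- The key structural fact about the projection onto `Tset φ x` of a point of
the cone: its first coordinate is `min (z 0) x` and the residual stays in the cone. -/
lemma proj_struct (φ x : ℝ) (ht : 0 ≤ Real.tan φ) (hx0 : 0 ≤ x)
    (z : EuclideanSpace ℝ (Fin 2)) (hz0 : 0 ≤ z 0) (hz1 : |z 1| ≤ z 0 * Real.tan φ)
    (w : EuclideanSpace ℝ (Fin 2)) (hw : w ∈ Tset φ x)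
    (hmin : ∀ c ∈ Tset φ x, dist z w ≤ dist z c) :
    w 0 = min (z 0) x ∧ |z 1 - w 1| ≤ (z 0 - w 0) * Real.tan φ := by
  set t := Real.tan φ with htdef
  have hmid : ∀ a ∈ Tset φ x, ∀ b ∈ Tset φ x, (1/2:ℝ) • (a + b) ∈ Tset φ x := by
    rintro a ⟨ha0, ha1, ha2⟩ b ⟨hb0, hb1, hb2⟩
    have e0 : ((1/2:ℝ) • (a + b)) 0 = (1/2) * (a 0 + b 0) := rfl
    have e1 : ((1/2:ℝ) • (a + b)) 1 = (1/2) * (a 1 + b 1) := rfl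
    refine ⟨by rw [e0]; linarith, by rw [e0]; linarith, ?_⟩
    rw [e0, e1, abs_mul]
    have h1 : |a 1 + b 1| ≤ |a 1| + |b 1| := abs_add_le _ _
    have : |(1/2:ℝ)| = 1/2 := by norm_num
    rw [this]
    nlinarith [abs_nonneg (a 1 + b 1)]
  rcases le_or_gt (z 0) x with hle | hlt
  · -- z itself is in Tset φ x, so w = z
    have hzK : z ∈ Tset φ x := ⟨hz0, hle, hz1⟩
    have h0 : dist z w ≤ 0 := by simpa using hmin z hzK
    have : w = z := by
      have := le_antisymm h0 dist_nonneg
      exact (dist_eq_zero.mp this).symm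
    subst this
    constructor
    · exact (min_eq_left hle).symm
    · simp
  · -- projection is the clamped point (x, q')
    set q' : ℝ := max (-(x*t)) (min (z 1) (x*t)) with hq'
    set w₀ : EuclideanSpace ℝ (Fin 2) := WithLp.toLp 2 ![x, q'] with hw₀def
    have hw₀0 : w₀ 0 = x := rfl
    have hw₀1 : w₀ 1 = q' := rfl
    have hxt : 0 ≤ x * t := mul_nonneg hx0 ht
    have hq'le : q' ≤ x * t := max_le (by linarith) (min_le_right _ _)
    have hq'ge : -(x*t) ≤ q' := le_max_left _ _
    have hw₀K : w₀ ∈ Tset φ x := by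
      refine ⟨by rw [hw₀0]; exact hx0, le_of_eq hw₀0, ?_⟩
      rw [hw₀0, hw₀1]
      exact abs_le.mpr ⟨by linarith, hq'le⟩
    have hvar : ∀ c ∈ Tset φ x, ⟪z - w₀, c - w₀⟫ ≤ 0 := by
      rintro c ⟨hc0, hc1, hc2⟩
      have hinner : ⟪z - w₀, c - w₀⟫ =
          (z 0 - x) * (c 0 - x) + (z 1 - q') * (c 1 - q') := by
        simp only [PiLp.inner_apply, Fin.sum_univ_two, RCLike.inner_apply, PiLp.sub_apply,
          hw₀def, Matrix.cons_val_zero, Matrix.cons_val_one, Matrix.head_cons, conj_trivial]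
        ring
      rw [hinner]
      have habs := abs_le.mp hc2
      have h1 : (z 0 - x) * (c 0 - x) ≤ 0 :=
        mul_nonpos_of_nonneg_of_nonpos (by linarith) (by linarith)
      have h2 : (z 1 - q') * (c 1 - q') ≤ 0 := by
        rcases le_or_gt (z 1) (x*t) with hz1le | hz1gt
        · rcases le_or_gt (-(x*t)) (z 1) with hz1ge | hz1lt
          · have : q' = z 1 := by rw [hq', min_eq_left hz1le, max_eq_right hz1ge]
            rw [this]; simp
          · have : q' = -(x*t) := by
              rw [hq', min_eq_left hz1le, max_eq_left hz1lt.le]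
            rw [this]
            have hcge : -(c 0 * t) ≤ c 1 := habs.1
            have hct : c 0 * t ≤ x * t := mul_le_mul_of_nonneg_right hc1 ht
            exact mul_nonpos_of_nonpos_of_nonneg (by linarith) (by linarith)
        · have : q' = x*t := by
            rw [hq', min_eq_right hz1gt.le, max_eq_right (by linarith)]
          rw [this]
          have hcle : c 1 ≤ c 0 * t := habs.2
          have hct : c 0 * t ≤ x * t := mul_le_mul_of_nonneg_right hc1 ht
          exact mul_nonpos_of_nonneg_of_nonpos (by linarith) (by linarith)
      linarith
    have hweq : w = w₀ := proj_unique hmid hw hmin hw₀K hvar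
    subst hweq
    refine ⟨by rw [hw₀0, min_eq_right hlt.le], ?_⟩
    rw [hw₀0, hw₀1]
    have habsz := abs_le.mp hz1
    have hzt : x * t ≤ z 0 * t := mul_le_mul_of_nonneg_right hlt.le ht
    rcases le_or_gt (z 1) (x*t) with hz1le | hz1gt
    · rcases le_or_gt (-(x*t)) (z 1) with hz1ge | hz1lt
      · have : q' = z 1 := by rw [hq', min_eq_left hz1le, max_eq_right hz1ge]
        rw [this]
        simp only [sub_self, abs_zero]
        nlinarith
      · have : q' = -(x*t) := by rw [hq', min_eq_left hz1le, max_eq_left hz1lt.le]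
        rw [this]
        rw [abs_le]
        constructor <;> nlinarith
    · have : q' = x*t := by rw [hq', min_eq_right hz1gt.le, max_eq_right (by linarith)]
      rw [this, abs_le]
      constructor <;> nlinarith

theorem stmt17 (Pmax φ : ℝ) (hP : 0 ≤ Pmax) (hφ0 : 0 ≤ φ) (hφ1 : φ < Real.pi / 2)
    (projT : ℝ → EuclideanSpace ℝ (Fin 2) → EuclideanSpace ℝ (Fin 2))
    (hproj : ∀ x ∈ Icc (0 : ℝ) Pmax, ∀ z : EuclideanSpace ℝ (Fin 2),
        projT x z ∈ Tset φ x ∧ ∀ c ∈ Tset φ x, dist z (projT x z) ≤ dist z c) :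
    (∀ x ∈ Icc (0 : ℝ) Pmax, ∀ z ∈ Tset φ Pmax, ∀ p ∈ Tset φ x,
        p + z - projT x z ∈ Tset φ Pmax) ∧
    (0 : EuclideanSpace ℝ (Fin 2)) ∈ Tset φ Pmax ∧
    (∀ Q : Set (EuclideanSpace ℝ (Fin 2)),
        (∀ x ∈ Icc (0 : ℝ) Pmax, ∀ p ∈ Tset φ x, ∀ z ∈ Q, z + p - projT x z ∈ Q) →
        (0 : EuclideanSpace ℝ (Fin 2)) ∈ Q → Tset φ Pmax ⊆ Q) := by
  have ht : 0 ≤ Real.tan φ := Real.tan_nonneg_of_nonneg_of_le_pi_div_two hφ0 hφ1.le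
  have h0mem : (0 : EuclideanSpace ℝ (Fin 2)) ∈ Tset φ Pmax := by
    refine ⟨?_, ?_, ?_⟩ <;> simp [hP]
  refine ⟨?_, h0mem, ?_⟩
  · rintro x ⟨hx0, hxP⟩ z hz p hp
    obtain ⟨hz0, hzP, hz1⟩ := hz
    obtain ⟨hp0, hpx, hp1⟩ := hp
    obtain ⟨hwK, hwmin⟩ := hproj x ⟨hx0, hxP⟩ z
    set w := projT x z with hwdef
    obtain ⟨hw0, hwres⟩ := proj_struct φ x ht hx0 z hz0 hz1 w hwK hwmin
    have e0 : (p + z - w) 0 = p 0 + z 0 - w 0 := rfl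
    have e1 : (p + z - w) 1 = p 1 + z 1 - w 1 := rfl
    have hmin0 : min (z 0) x ≤ z 0 := min_le_left _ _
    have hminx : min (z 0) x ≤ x := min_le_right _ _
    refine ⟨?_, ?_, ?_⟩
    · rw [e0, hw0]; linarith
    · rw [e0, hw0]
      rcases min_cases (z 0) x with ⟨h, _⟩ | ⟨h, _⟩ <;> rw [h] <;> linarith
    · rw [e0, e1]
      have h1 : |p 1 + (z 1 - w 1)| ≤ |p 1| + |z 1 - w 1| := abs_add_le _ _
      have : p 1 + z 1 - w 1 = p 1 + (z 1 - w 1) := by ring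
      rw [this]
      have h2 : |p 1| + |z 1 - w 1| ≤ p 0 * Real.tan φ + (z 0 - w 0) * Real.tan φ := by
        linarith
      calc |p 1 + (z 1 - w 1)| ≤ p 0 * Real.tan φ + (z 0 - w 0) * Real.tan φ := le_trans h1 h2
        _ = (p 0 + z 0 - w 0) * Real.tan φ := by ring
  · intro Q hQinv hQ0
    -- first : projT Pmax 0 = 0
    obtain ⟨hwK, hwmin⟩ := hproj Pmax ⟨hP, le_refl _⟩ (0 : EuclideanSpace ℝ (Fin 2))
    have hproj0 : projT Pmax 0 = 0 := by
      have h := hwmin 0 h0mem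
      simp only [dist_self] at h
      have := le_antisymm h dist_nonneg
      exact (dist_eq_zero.mp this).symm
    intro p hp
    have := hQinv Pmax ⟨hP, le_refl _⟩ p hp 0 hQ0
    rw [hproj0] at this
    simpa using this
end
end
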